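/- Let p be an odd prime number and let G be the group Φ_10(1^5), i.e., the group of order p^5 with generators f1,…,f5 and relations f_i^p = 1 (1 ≤ i ≤ 5), [f2,f1] = f3, [f3,f1] = f4, [f4,f1] = [f3,f2] = f5, [f4,f2] = [f4,f3] = 1, and f5 central. Then B_0(G) ≠ 0. -/

import Mathlib

/-- The coefficient group `ℚ/ℤ`. -/
abbrev QZ : Type := ℚ ⧸ AddSubgroup.zmultiples (1 : ℚ)

/-- A (inhomogeneous) 2-cocycle on `G` with values in `ℚ/ℤ` (trivial action). -/
def IsGrpCocycle {G : Type*} [Group G] (f : G → G → QZ) : Prop :=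
  ∀ g h k : G, f g h + f (g * h) k = f h k + f g (h * k)

/-- A 2-coboundary on `G` with values in `ℚ/ℤ` (trivial action). -/
def IsGrpCoboundary {G : Type*} [Group G] (f : G → G → QZ) : Prop :=
  ∃ c : G → QZ, ∀ g h : G, f g h = c g + c h - c (g * h)

/-- The additive group of 2-cocycles. -/
def cocycles2 (G : Type*) [Group G] : AddSubgroup (G → G → QZ) where
  carrier := {f | IsGrpCocycle f}
  zero_mem' := by intro g h k; simp
  add_mem' := by
    intro a b ha hb g h k
    simp only [Pi.add_apply]
    rw [add_add_add_comm, ha g h k, hb g h k, add_add_add_comm]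
  neg_mem' := by
    intro a ha g h k
    simp only [Pi.neg_apply, ← neg_add]
    rw [ha g h k]

/-- The subgroup of 2-coboundaries inside the group of 2-cocycles. -/
def coboundaries2 (G : Type*) [Group G] : AddSubgroup (cocycles2 G) where
  carrier := {f | IsGrpCoboundary (f : G → G → QZ)}
  zero_mem' := ⟨0, by intro g h; simp⟩
  add_mem' := by
    rintro a b ⟨c, hc⟩ ⟨d, hd⟩
    refine ⟨c + d, fun g h => ?_⟩
    have : ((a + b : cocycles2 G) : G → G → QZ) g h
        = (a : G → G → QZ) g h + (b : G → G → QZ) g h := rfl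
    rw [this, hc g h, hd g h]
    simp only [Pi.add_apply]
    abel
  neg_mem' := by
    rintro a ⟨c, hc⟩
    refine ⟨-c, fun g h => ?_⟩
    have : ((-a : cocycles2 G) : G → G → QZ) g h = -((a : G → G → QZ) g h) := rfl
    rw [this, hc g h]
    simp only [Pi.neg_apply]
    abel

/-- The second cohomology group `H²(G, ℚ/ℤ)` (trivial action), as cocycles mod coboundaries. -/
abbrev H2 (G : Type*) [Group G] : Type _ := cocycles2 G ⧸ coboundaries2 G

/-- A group is bicyclic if it is cyclic or the direct product of two cyclic groups. -/
def IsBicyclic (A : Type*) [Group A] : Prop :=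
  IsCyclic A ∨ ∃ B C : Subgroup A, IsCyclic B ∧ IsCyclic C ∧ Nonempty (A ≃* B × C)

/-- The restriction of `f` to every bicyclic subgroup is a coboundary. -/
def RestrictsToCoboundaries {G : Type*} [Group G] (f : G → G → QZ) : Prop :=
  ∀ A : Subgroup G, IsBicyclic A → IsGrpCoboundary (fun a b : A => f a b)

/-- The Bogomolov multiplier `B₀(G)`: the subgroup of `H²(G, ℚ/ℤ)` consisting of the classes
whose restriction to every bicyclic subgroup of `G` vanishes. -/
def B0 (G : Type*) [Group G] : AddSubgroup (H2 G) where
  carrier := {x | ∃ f : cocycles2 G,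
    (QuotientAddGroup.mk f : H2 G) = x ∧ RestrictsToCoboundaries (f : G → G → QZ)}
  zero_mem' := by
    refine ⟨0, rfl, fun A _ => ⟨0, fun a b => ?_⟩⟩
    simp
  add_mem' := by
    rintro x y ⟨f, rfl, hf⟩ ⟨g, rfl, hg⟩
    refine ⟨f + g, rfl, fun A hA => ?_⟩
    obtain ⟨c, hc⟩ := hf A hA
    obtain ⟨d, hd⟩ := hg A hA
    refine ⟨c + d, fun a b => ?_⟩
    have hc' : (f : G → G → QZ) (a : G) (b : G) = c a + c b - c (a * b) := hc a b
    have hd' : (g : G → G → QZ) (a : G) (b : G) = d a + d b - d (a * b) := hd a b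
    show ((f + g : cocycles2 G) : G → G → QZ) (a : G) (b : G)
        = (c + d) a + (c + d) b - (c + d) (a * b)
    have : ((f + g : cocycles2 G) : G → G → QZ) (a : G) (b : G)
        = (f : G → G → QZ) (a : G) (b : G) + (g : G → G → QZ) (a : G) (b : G) := rfl
    rw [this, hc', hd']
    simp only [Pi.add_apply]
    abel
  neg_mem' := by
    rintro x ⟨f, rfl, hf⟩
    refine ⟨-f, rfl, fun A hA => ?_⟩
    obtain ⟨c, hc⟩ := hf A hA
    refine ⟨-c, fun a b => ?_⟩
    have hc' : (f : G → G → QZ) (a : G) (b : G) = c a + c b - c (a * b) := hc a b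
    show ((-f : cocycles2 G) : G → G → QZ) (a : G) (b : G)
        = (-c) a + (-c) b - (-c) (a * b)
    have : ((-f : cocycles2 G) : G → G → QZ) (a : G) (b : G)
        = -((f : G → G → QZ) (a : G) (b : G)) := rfl
    rw [this, hc']
    simp only [Pi.neg_apply]
    abel

/-- The commutator `[g,h] = g⁻¹h⁻¹gh`. -/
def cmt {G : Type*} [Group G] (g h : G) : G := g⁻¹ * h⁻¹ * g * h


/-! ### Support lemmas: the coefficient group `ℚ/ℤ` -/

noncomputable def qzmk : ℚ →+ QZ := QuotientAddGroup.mk' (AddSubgroup.zmultiples (1 : ℚ))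

lemma qzmk_surj : Function.Surjective qzmk := QuotientAddGroup.mk'_surjective _

lemma qzmk_int (k : ℤ) : qzmk (k : ℚ) = 0 := by
  rw [qzmk, QuotientAddGroup.mk'_apply, QuotientAddGroup.eq_zero_iff]
  exact ⟨k, by simp⟩

lemma qzmk_nat (k : ℕ) : qzmk (k : ℚ) = 0 := by
  have := qzmk_int (k : ℤ); push_cast at this; exact this

lemma QZ_div (m : ℕ) (hm : 0 < m) (t : QZ) : ∃ r : QZ, m • r = t := by
  obtain ⟨q, rfl⟩ := qzmk_surj t
  refine ⟨qzmk (q / m), ?_⟩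
  rw [← map_nsmul]
  congr 1
  rw [nsmul_eq_mul]
  field_simp

noncomputable def eps (p : ℕ) (x : ZMod p) : QZ := qzmk ((x.val : ℚ) / p)

lemma eps_add {p : ℕ} [NeZero p] (x y : ZMod p) :
    eps p (x + y) = eps p x + eps p y := by
  have hp0 : (p:ℚ) ≠ 0 := by exact_mod_cast NeZero.ne p
  have key : x.val + y.val = (x+y).val + p * ((x.val + y.val) / p) := by
    have hv : (x + y).val = (x.val + y.val) % p := ZMod.val_add x y
    have := Nat.mod_add_div (x.val + y.val) p
    omega
  have keyq : ((x.val : ℚ)) + (y.val : ℚ)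
      = ((x+y).val : ℚ) + p * (((x.val + y.val) / p : ℕ) : ℚ) := by
    exact_mod_cast congrArg (fun n : ℕ => (n : ℚ)) key
  have hkey : (x.val : ℚ) / p + (y.val : ℚ) / p
      = ((x+y).val : ℚ) / p + (((x.val + y.val) / p : ℕ) : ℚ) := by
    rw [← add_div, keyq, add_div]
    congr 1
    rw [mul_comm, mul_div_assoc, div_self hp0, mul_one]
  unfold eps
  rw [← map_add, hkey, map_add, qzmk_nat, add_zero]

lemma eps_zero {p : ℕ} [NeZero p] : eps p 0 = 0 := by
  unfold eps
  rw [ZMod.val_zero]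
  simp only [Nat.cast_zero, zero_div, map_zero]

lemma eps_one_ne_zero {p : ℕ} (hp : 1 < p) : eps p 1 ≠ 0 := by
  unfold eps
  haveI : NeZero p := ⟨by omega⟩
  rw [ZMod.val_one_eq_one_mod]
  rw [Nat.mod_eq_of_lt hp]
  rw [Nat.cast_one]
  rw [qzmk, QuotientAddGroup.mk'_apply, Ne, QuotientAddGroup.eq_zero_iff]
  rintro ⟨k, hk⟩
  simp only [zsmul_eq_mul, mul_one] at hk
  have hp0 : (0:ℚ) < p := by positivity
  have h1 : (0:ℚ) < 1 / p := by positivity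
  have h2 : (1:ℚ) / p < 1 := by rw [div_lt_one hp0]; exact_mod_cast hp
  rw [← hk] at h1 h2
  have hk1 : (0:ℤ) < k := by exact_mod_cast h1
  have : (1:ℚ) ≤ (k:ℚ) := by exact_mod_cast hk1
  linarith

/-! ### The twisted extension: a symmetric cocycle on a bicyclic group is a coboundary -/

@[ext]
structure Tw (A : Type*) where
  q : QZ
  g : A

section TwGroup

variable {A : Type*} [Group A] (f : A → A → QZ)

def twMul : Tw A → Tw A → Tw A := fun u v => ⟨u.q + v.q + f u.g v.g, u.g * v.g⟩

lemma tw_f_one_left (hf : IsGrpCocycle f) (hnorm : f 1 1 = 0) (b : A) : f 1 b = 0 := by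
  have h := hf 1 1 b
  rw [one_mul, one_mul] at h
  have : f 1 1 = f 1 b := by
    have := add_right_cancel (a := f 1 1) (b := f 1 b) (c := f 1 b) ?_
    · exact this
    · rw [h]
  rw [← this, hnorm]

lemma tw_f_one_right (hf : IsGrpCocycle f) (hnorm : f 1 1 = 0) (a : A) : f a 1 = 0 := by
  have h := hf a 1 1
  rw [mul_one, mul_one] at h
  have : f a 1 = f 1 1 := add_left_cancel (a := f a 1) (by rw [h]; abel)
  rw [this, hnorm]

lemma tw_f_inv (hf : IsGrpCocycle f) (hnorm : f 1 1 = 0) (a : A) : f a a⁻¹ = f a⁻¹ a := by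
  have h := hf a a⁻¹ a
  rw [mul_inv_cancel, inv_mul_cancel] at h
  rw [tw_f_one_left f hf hnorm, tw_f_one_right f hf hnorm, add_zero, add_zero] at h
  exact h

def twGroup (hf : IsGrpCocycle f) (hnorm : f 1 1 = 0) : Group (Tw A) where
  mul := twMul f
  one := ⟨0, 1⟩
  inv := fun u => ⟨-u.q - f u.g u.g⁻¹, u.g⁻¹⟩
  mul_assoc := by
    rintro ⟨q1, a⟩ ⟨q2, b⟩ ⟨q3, c⟩
    show twMul f (twMul f _ _) _ = twMul f _ (twMul f _ _)
    unfold twMul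
    simp only [Tw.mk.injEq]
    constructor
    · calc q1 + q2 + f a b + q3 + f (a * b) c
          = (q1 + q2 + q3) + (f a b + f (a * b) c) := by abel
        _ = (q1 + q2 + q3) + (f b c + f a (b * c)) := by rw [hf a b c]
        _ = q1 + (q2 + q3 + f b c) + f a (b * c) := by abel
    · exact mul_assoc a b c
  one_mul := by
    rintro ⟨q, a⟩
    show twMul f ⟨0, 1⟩ ⟨q, a⟩ = ⟨q, a⟩
    unfold twMul
    simp [tw_f_one_left f hf hnorm]
  mul_one := by
    rintro ⟨q, a⟩
    show twMul f ⟨q, a⟩ ⟨0, 1⟩ = ⟨q, a⟩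
    unfold twMul
    simp [tw_f_one_right f hf hnorm]
  inv_mul_cancel := by
    rintro ⟨q, a⟩
    show twMul f ⟨-q - f a a⁻¹, a⁻¹⟩ ⟨q, a⟩ = ⟨0, 1⟩
    unfold twMul
    simp only [Tw.mk.injEq, inv_mul_cancel, and_true]
    rw [tw_f_inv f hf hnorm]
    abel

end TwGroup

section SymmCob

variable {A : Type*} [Group A]

lemma symm_coboundary_norm (x y : A) (m n : ℕ) (hm : 0 < m) (hn : 0 < n)
    (hx : x ^ m = 1) (hy : y ^ n = 1)
    (comm : ∀ a b : A, a * b = b * a)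
    (gen : ∀ a : A, ∃ i j : ℤ, a = x ^ i * y ^ j)
    (indep : ∀ i j : ℤ, x ^ i = y ^ j → (m:ℤ) ∣ i ∧ (n:ℤ) ∣ j)
    (f : A → A → QZ) (hf : IsGrpCocycle f) (hnorm : f 1 1 = 0)
    (hsymm : ∀ a b : A, f a b = f b a) :
    IsGrpCoboundary f := by
  classical
  letI : Group (Tw A) := twGroup f hf hnorm
  have hmulq : ∀ u v : Tw A, (u * v).q = u.q + v.q + f u.g v.g := fun _ _ => rfl
  have hmulg : ∀ u v : Tw A, (u * v).g = u.g * v.g := fun _ _ => rfl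
  have honeq : (1 : Tw A).q = 0 := rfl
  have honeg : (1 : Tw A).g = 1 := rfl
  let πh : Tw A →* A :=
    { toFun := Tw.g, map_one' := rfl, map_mul' := fun _ _ => rfl }
  have hπ : ∀ (u : Tw A) (i : ℤ), (u ^ i).g = u.g ^ i := fun u i => map_zpow πh u i
  have hπn : ∀ (u : Tw A) (k : ℕ), (u ^ k).g = u.g ^ k := fun u k => map_pow πh u k
  have hcentral : ∀ (r : QZ) (v : Tw A), (Tw.mk r 1 : Tw A) * v = v * Tw.mk r 1 := by
    intro r v
    ext
    · rw [hmulq, hmulq]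
      simp only [tw_f_one_left f hf hnorm, tw_f_one_right f hf hnorm]
      abel
    · rw [hmulg, hmulg, one_mul, mul_one]
  have hzpowc : ∀ (r : QZ) (k : ℕ), (Tw.mk r 1 : Tw A) ^ k = Tw.mk (k • r) (1 : A) := by
    intro r k
    induction k with
    | zero =>
      rw [pow_zero]
      ext
      · rw [honeq, zero_nsmul]
      · rw [honeg]
    | succ k ih =>
      rw [pow_succ, ih]
      ext
      · rw [hmulq]
        simp only [tw_f_one_right f hf hnorm]
        rw [succ_nsmul]
        abel
      · rw [hmulg, mul_one]
  have lift : ∀ (z : A) (k : ℕ), 0 < k → z ^ k = 1 → ∃ u : Tw A, u.g = z ∧ u ^ k = 1 := by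
    intro z k hk hzk
    obtain ⟨r, hr⟩ := QZ_div k hk (-(((⟨0, z⟩ : Tw A) ^ k).q))
    refine ⟨Tw.mk r 1 * ⟨0, z⟩, by rw [hmulg, one_mul], ?_⟩
    have hcomm : Commute (Tw.mk r 1 : Tw A) (⟨0, z⟩ : Tw A) := hcentral r _
    rw [hcomm.mul_pow, hzpowc]
    have hg1 : ((⟨0, z⟩ : Tw A) ^ k).g = 1 := by rw [hπn]; exact hzk
    ext
    · rw [hmulq, hr, hg1, tw_f_one_right f hf hnorm, honeq]
      rw [add_zero]; exact neg_add_cancel (G := QZ) _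
    · rw [hmulg, hg1, honeg, mul_one]
  obtain ⟨U, hUg, hUm⟩ := lift x m hm hx
  obtain ⟨V, hVg, hVn⟩ := lift y n hn hy
  have hUV : Commute U V := by
    ext
    · rw [hmulq, hmulq, hUg, hVg, hsymm x y]; abel
    · rw [hmulg, hmulg, hUg, hVg]; exact comm x y
  have hUzero : ∀ i : ℤ, (m:ℤ) ∣ i → U ^ i = 1 := by
    rintro i ⟨t, ht⟩
    rw [ht, zpow_mul, zpow_natCast, hUm, one_zpow]
  have hVzero : ∀ j : ℤ, (n:ℤ) ∣ j → V ^ j = 1 := by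
    rintro j ⟨t, ht⟩
    rw [ht, zpow_mul, zpow_natCast, hVn, one_zpow]
  have hcx : ∀ i j : ℤ, Commute (x ^ i) (y ^ j) := by
    intro i j
    have cxy : Commute x y := comm x y
    exact cxy.zpow_zpow i j
  have wd : ∀ i j i' j' : ℤ, x ^ i * y ^ j = x ^ i' * y ^ j' →
      U ^ i * V ^ j = U ^ i' * V ^ j' := by
    intro i j i' j' hEq
    have e1 : x ^ (i - i') = y ^ (j' - j) := by
      have h2 : (x ^ i')⁻¹ * (x ^ i * y ^ j) * (y ^ j)⁻¹
          = (x ^ i')⁻¹ * (x ^ i' * y ^ j') * (y ^ j)⁻¹ := by rw [hEq]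
      calc x ^ (i - i') = (x ^ i')⁻¹ * (x ^ i * y ^ j) * (y ^ j)⁻¹ := by group
        _ = (x ^ i')⁻¹ * (x ^ i' * y ^ j') * (y ^ j)⁻¹ := h2
        _ = y ^ (j' - j) := by group
    obtain ⟨hdm, hdn⟩ := indep _ _ e1
    have hdn' : (n:ℤ) ∣ j - j' := by
      have := dvd_neg.2 hdn
      rwa [neg_sub] at this
    have hU' : U ^ i = U ^ i' := by
      have h3 : U ^ i = U ^ i' * U ^ (i - i') := by rw [← zpow_add]; congr 1; ring
      rw [h3, hUzero _ hdm, mul_one]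
    have hV' : V ^ j = V ^ j' := by
      have h3 : V ^ j = V ^ j' * V ^ (j - j') := by rw [← zpow_add]; congr 1; ring
      rw [h3, hVzero _ hdn', mul_one]
    rw [hU', hV']
  choose I J hIJ using gen
  refine ⟨fun a => -((U ^ I a * V ^ J a).q), fun a b => ?_⟩
  dsimp only
  have hgprod : ∀ a : A, (U ^ I a * V ^ J a).g = a := by
    intro a
    rw [hmulg, hπ, hπ, hUg, hVg, ← hIJ a]
  have hab2 : a * b = x ^ (I a + I b) * y ^ (J a + J b) := by
    calc a * b = (x ^ I a * y ^ J a) * (x ^ I b * y ^ J b) := by rw [← hIJ a, ← hIJ b]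
      _ = x ^ I a * ((y ^ J a * x ^ I b) * y ^ J b) := by group
      _ = x ^ I a * ((x ^ I b * y ^ J a) * y ^ J b) := by rw [((hcx (I b) (J a)).symm).eq]
      _ = (x ^ (I a + I b)) * (y ^ (J a + J b)) := by group
  have hwd := wd (I (a*b)) (J (a*b)) (I a + I b) (J a + J b) (by rw [← hIJ (a*b), hab2])
  have hsplit : U ^ (I a + I b) * V ^ (J a + J b)
      = (U ^ I a * V ^ J a) * (U ^ I b * V ^ J b) := by
    calc U ^ (I a + I b) * V ^ (J a + J b)
        = U ^ I a * ((U ^ I b * V ^ J a) * V ^ J b) := by group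
      _ = U ^ I a * ((V ^ J a * U ^ I b) * V ^ J b) := by
          rw [((hUV.zpow_zpow (I b) (J a)).symm).eq]
      _ = (U ^ I a * V ^ J a) * (U ^ I b * V ^ J b) := by group
  have hq : (U ^ I (a*b) * V ^ J (a*b)).q
      = (U ^ I a * V ^ J a).q + (U ^ I b * V ^ J b).q + f a b := by
    rw [hwd, hsplit, hmulq, hgprod a, hgprod b]
  rw [hq]
  abel

lemma symm_coboundary (x y : A) (m n : ℕ) (hm : 0 < m) (hn : 0 < n)
    (hx : x ^ m = 1) (hy : y ^ n = 1)
    (comm : ∀ a b : A, a * b = b * a)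
    (gen : ∀ a : A, ∃ i j : ℤ, a = x ^ i * y ^ j)
    (indep : ∀ i j : ℤ, x ^ i = y ^ j → (m:ℤ) ∣ i ∧ (n:ℤ) ∣ j)
    (f : A → A → QZ) (hf : IsGrpCocycle f)
    (hsymm : ∀ a b : A, f a b = f b a) :
    IsGrpCoboundary f := by
  set f0 : A → A → QZ := fun a b => f a b - f 1 1 with hf0
  have hf0c : IsGrpCocycle f0 := by
    intro g h k
    simp only [hf0]
    have := hf g h k
    calc f g h - f 1 1 + (f (g*h) k - f 1 1)
        = (f g h + f (g*h) k) - f 1 1 - f 1 1 := by abel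
      _ = (f h k + f g (h*k)) - f 1 1 - f 1 1 := by rw [this]
      _ = f h k - f 1 1 + (f g (h*k) - f 1 1) := by abel
  have hf0n : f0 1 1 = 0 := by simp [hf0]
  have hf0s : ∀ a b : A, f0 a b = f0 b a := by
    intro a b; simp only [hf0, hsymm a b]
  obtain ⟨c, hc⟩ := symm_coboundary_norm x y m n hm hn hx hy comm gen indep f0 hf0c hf0n hf0s
  refine ⟨fun a => c a + f 1 1, fun g h => ?_⟩
  have := hc g h
  simp only [hf0] at this
  have h2 : f g h = c g + c h - c (g * h) + f 1 1 := by
    rw [← this]; abel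
  rw [h2]; beta_reduce; abel

end SymmCob


lemma bicyclic_coboundary {A : Type*} [Group A] [Finite A] (hbi : IsBicyclic A)
    (f : A → A → QZ) (hf : IsGrpCocycle f)
    (hsymm : ∀ a b : A, a * b = b * a → f a b = f b a) :
    IsGrpCoboundary f := by
  rcases hbi with hc | ⟨B, C, hB, hC, ⟨e⟩⟩
  · haveI := hc
    have comm : ∀ a b : A, a * b = b * a := fun a b => by
      letI := IsCyclic.commGroup (α := A)
      exact mul_comm a b
    obtain ⟨g, hg⟩ := hc.exists_generator
    refine symm_coboundary g (1:A) (orderOf g) 1 (orderOf_pos g) one_pos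
      (pow_orderOf_eq_one g) (one_pow 1) comm ?_ ?_ f hf (fun a b => hsymm a b (comm a b))
    · intro a
      obtain ⟨i, hi⟩ := Subgroup.mem_zpowers_iff.mp (hg a)
      exact ⟨i, 0, by rw [zpow_zero, mul_one, hi]⟩
    · intro i j hij
      rw [one_zpow] at hij
      exact ⟨orderOf_dvd_iff_zpow_eq_one.mpr hij, one_dvd _⟩
  · haveI := hB; haveI := hC
    have commBC : ∀ u v : B × C, u * v = v * u := fun u v => by
      letI := IsCyclic.commGroup (α := B)
      letI := IsCyclic.commGroup (α := C)
      exact mul_comm u v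
    have comm : ∀ a b : A, a * b = b * a := fun a b =>
      e.injective (by rw [map_mul, map_mul, commBC])
    obtain ⟨gB, hgB⟩ := hB.exists_generator
    obtain ⟨gC, hgC⟩ := hC.exists_generator
    set x : A := e.symm (gB, 1) with hxdef
    set y : A := e.symm (1, gC) with hydef
    have hxp : x ^ orderOf gB = 1 := by
      rw [← map_pow]
      have : ((gB, (1:C)) : B × C) ^ orderOf gB = 1 := by
        rw [Prod.pow_mk, pow_orderOf_eq_one, one_pow]
        rfl
      rw [this, map_one]
    have hyp : y ^ orderOf gC = 1 := by
      rw [← map_pow]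
      have : (((1:B), gC) : B × C) ^ orderOf gC = 1 := by
        rw [Prod.pow_mk, pow_orderOf_eq_one, one_pow]
        rfl
      rw [this, map_one]
    have hz1 : ∀ i : ℤ, ((gB, (1:C)) : ↥B × ↥C) ^ i = (gB ^ i, (1:C)) := by
      intro i
      refine Prod.ext (map_zpow (MonoidHom.fst ↥B ↥C) _ i) ?_
      · exact (map_zpow (MonoidHom.snd ↥B ↥C) _ i).trans (one_zpow i)
    have hz2 : ∀ j : ℤ, (((1:B), gC) : ↥B × ↥C) ^ j = ((1:B), gC ^ j) := by
      intro j
      refine Prod.ext ?_ (map_zpow (MonoidHom.snd ↥B ↥C) _ j)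
      · exact (map_zpow (MonoidHom.fst ↥B ↥C) _ j).trans (one_zpow j)
    refine symm_coboundary x y (orderOf gB) (orderOf gC) (orderOf_pos gB) (orderOf_pos gC)
      hxp hyp comm ?_ ?_ f hf (fun a b => hsymm a b (comm a b))
    · intro a
      obtain ⟨i, hi⟩ := Subgroup.mem_zpowers_iff.mp (hgB (e a).1)
      obtain ⟨j, hj⟩ := Subgroup.mem_zpowers_iff.mp (hgC (e a).2)
      refine ⟨i, j, ?_⟩
      have : e a = ((gB, (1:C)) : B × C) ^ i * (((1:B), gC) : B × C) ^ j := by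
        rw [hz1, hz2, Prod.mk_mul_mk, mul_one, one_mul, hi, hj]
      calc a = e.symm (e a) := (e.symm_apply_apply a).symm
        _ = e.symm (((gB, (1:C)) : B × C) ^ i * (((1:B), gC) : B × C) ^ j) := by rw [this]
        _ = x ^ i * y ^ j := by rw [map_mul, map_zpow, map_zpow]
    · intro i j hij
      have h2 : ((gB, (1:C)) : B × C) ^ i = (((1:B), gC) : B × C) ^ j := by
        have := congrArg e hij
        rw [hxdef, hydef, map_zpow, map_zpow, MulEquiv.apply_symm_apply,
          MulEquiv.apply_symm_apply] at this
        exact this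
      rw [hz1, hz2, Prod.mk.injEq] at h2
      exact ⟨orderOf_dvd_iff_zpow_eq_one.mpr (by rw [h2.1]),
        orderOf_dvd_iff_zpow_eq_one.mpr (by rw [← h2.2])⟩


section Collect

variable {G : Type*} [Group G]

private lemma swap' {x y : G} (h : x * y = y * x) (z : G) :
    x * (y * z) = y * (x * z) := by rw [← mul_assoc, h, mul_assoc]

private lemma pull' {x y w : G} (h : x * y = w) (z : G) :
    x * (y * z) = w * z := by rw [← mul_assoc, h]

private lemma merge' (x : G) (i j : ℕ) (z : G) :
    x ^ i * (x ^ j * z) = x ^ (i + j) * z := by rw [← mul_assoc, ← pow_add]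

lemma collect_B1 (f2 f3 f5 : G)
    (s32 : f3 * f2 = f2 * (f3 * f5))
    (c5 : ∀ g : G, Commute f5 g) :
    ∀ c : ℕ, f3 ^ c * f2 = f2 * (f3 ^ c * f5 ^ c) := by
  intro c
  induction c with
  | zero => simp
  | succ c ih =>
    calc f3 ^ (c+1) * f2 = f3 * (f3 ^ c * f2) := by
          rw [pow_succ', mul_assoc]
      _ = f3 * (f2 * (f3 ^ c * f5 ^ c)) := by rw [ih]
      _ = (f3 * f2) * (f3 ^ c * f5 ^ c) := by rw [mul_assoc]
      _ = f2 * ((f3 * f3 ^ c) * (f5 * f5 ^ c)) := by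
          rw [s32, mul_assoc, mul_assoc, mul_assoc]
          congr 2
          rw [← mul_assoc f5, (c5 (f3 ^ c)).eq, mul_assoc]
      _ = f2 * (f3 ^ (c+1) * f5 ^ (c+1)) := by rw [← pow_succ', ← pow_succ']

lemma collect_B2 (f2 f3 f5 : G)
    (s32 : f3 * f2 = f2 * (f3 * f5))
    (c5 : ∀ g : G, Commute f5 g) :
    ∀ (c B : ℕ), f3 ^ c * f2 ^ B = f2 ^ B * (f3 ^ c * f5 ^ (c * B)) := by
  intro c B
  induction B with
  | zero => simp
  | succ B ih =>
    calc f3 ^ c * f2 ^ (B+1) = (f3 ^ c * f2 ^ B) * f2 := by rw [pow_succ, mul_assoc]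
      _ = f2 ^ B * ((f3 ^ c * f5 ^ (c * B)) * f2) := by rw [ih, mul_assoc]
      _ = f2 ^ B * (f3 ^ c * (f2 * f5 ^ (c * B))) := by
          rw [mul_assoc, ((c5 (f2)).pow_left (c*B)).eq]
      _ = f2 ^ B * ((f3 ^ c * f2) * f5 ^ (c * B)) := by rw [← mul_assoc (f3 ^ c)]
      _ = f2 ^ B * (f2 * ((f3 ^ c * f5 ^ c) * f5 ^ (c * B))) := by
          rw [collect_B1 f2 f3 f5 s32 c5 c, mul_assoc]
      _ = f2 ^ (B+1) * (f3 ^ c * f5 ^ (c * (B+1))) := by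
          rw [pow_succ, mul_assoc, mul_assoc, ← pow_add]
          ring_nf

lemma collect_NMUL (f2 f3 f4 f5 : G)
    (s32 : f3 * f2 = f2 * (f3 * f5))
    (c42 : Commute f4 f2) (c43 : Commute f4 f3)
    (c5 : ∀ g : G, Commute f5 g) :
    ∀ b c d e B C D E : ℕ,
      (f2^b * (f3^c * (f4^d * f5^e))) * (f2^B * (f3^C * (f4^D * f5^E)))
      = f2^(b+B) * (f3^(c+C) * (f4^(d+D) * f5^(e+E+c*B))) := by
  intro b c d e B C D E
  simp only [mul_assoc]
  rw [swap' ((c5 (f2^B)).pow_left e).eq]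
  rw [swap' ((c42.pow_pow d B).eq)]
  rw [pull' (collect_B2 f2 f3 f5 s32 c5 c B)]
  simp only [mul_assoc]
  rw [merge' f2 b B]
  rw [swap' ((c5 (f3^C)).pow_left e).eq]
  rw [swap' ((c43.pow_pow d C).eq)]
  rw [swap' ((c5 (f3^C)).pow_left (c*B)).eq]
  rw [merge' f3 c C]
  rw [swap' ((c5 (f4^D)).pow_left e).eq]
  rw [merge' f4 d D]
  rw [swap' ((c5 (f4^(d+D))).pow_left (c*B)).eq]
  rw [← pow_add, ← pow_add]
  congr 3
  ring


lemma choose2_succ (m : ℕ) : (m+1).choose 2 = m.choose 2 + m := by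
  rw [Nat.choose_succ_succ, Nat.choose_one_right, Nat.add_comm]

lemma choose3_succ (m : ℕ) : (m+1).choose 3 = m.choose 3 + m.choose 2 := by
  rw [Nat.choose_succ_succ]
  exact Nat.add_comm _ _

lemma collect_NPOW (f2 f3 f4 f5 : G)
    (s32 : f3 * f2 = f2 * (f3 * f5))
    (c42 : Commute f4 f2) (c43 : Commute f4 f3)
    (c5 : ∀ g : G, Commute f5 g) :
    ∀ m b c d e : ℕ,
      (f2^b * (f3^c * (f4^d * f5^e))) ^ m
      = f2^(m*b) * (f3^(m*c) * (f4^(m*d) * f5^(m*e + m.choose 2 * (c*b)))) := by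
  intro m b c d e
  induction m with
  | zero => simp
  | succ m ih =>
    rw [pow_succ, ih, collect_NMUL f2 f3 f4 f5 s32 c42 c43 c5]
    rw [choose2_succ]
    congr 3 <;> ring

variable (f1 f2 f3 f4 f5 : G)

lemma conj_pow_apply (k : ℕ) (x : G) :
    ((MulAut.conj f1⁻¹) ^ (k+1)) x = ((MulAut.conj f1⁻¹) ^ k) ((MulAut.conj f1⁻¹) x) := by
  rw [pow_succ]; rfl

lemma collect_move (k : ℕ) (x : G) :
    x * f1 ^ k = f1 ^ k * ((MulAut.conj f1⁻¹) ^ k) x := by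
  have h1 : ((MulAut.conj f1⁻¹) ^ k) x = (MulAut.conj ((f1⁻¹) ^ k)) x := by
    rw [map_pow]
  rw [h1, MulAut.conj_apply, inv_pow, inv_inv]
  group

section AlphaK

variable (s21 : f2 * f1 = f1 * (f2 * f3))
    (s31 : f3 * f1 = f1 * (f3 * f4))
    (s41 : f4 * f1 = f1 * (f4 * f5))
    (s32 : f3 * f2 = f2 * (f3 * f5))
    (c42 : Commute f4 f2) (c43 : Commute f4 f3)
    (c5 : ∀ g : G, Commute f5 g)

lemma alpha_f5 (c5 : ∀ g : G, Commute f5 g) : (MulAut.conj f1⁻¹) f5 = f5 := by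
  rw [MulAut.conj_apply, inv_inv, ← (c5 f1⁻¹).eq, mul_assoc, inv_mul_cancel, mul_one]

lemma alpha_f4 (s41 : f4 * f1 = f1 * (f4 * f5)) :
    (MulAut.conj f1⁻¹) f4 = f4 * f5 := by
  rw [MulAut.conj_apply, inv_inv, mul_assoc, s41, inv_mul_cancel_left]

lemma alpha_f3 (s31 : f3 * f1 = f1 * (f3 * f4)) :
    (MulAut.conj f1⁻¹) f3 = f3 * f4 := by
  rw [MulAut.conj_apply, inv_inv, mul_assoc, s31, inv_mul_cancel_left]

lemma alpha_f2 (s21 : f2 * f1 = f1 * (f2 * f3)) :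
    (MulAut.conj f1⁻¹) f2 = f2 * f3 := by
  rw [MulAut.conj_apply, inv_inv, mul_assoc, s21, inv_mul_cancel_left]

lemma alphak_f5 (c5 : ∀ g : G, Commute f5 g) :
    ∀ k : ℕ, ((MulAut.conj f1⁻¹) ^ k) f5 = f5 := by
  intro k
  induction k with
  | zero => rfl
  | succ k ih => rw [conj_pow_apply, alpha_f5 f1 f5 c5, ih]

lemma alphak_f4 (s41 : f4 * f1 = f1 * (f4 * f5)) (c5 : ∀ g : G, Commute f5 g) :
    ∀ k : ℕ, ((MulAut.conj f1⁻¹) ^ k) f4 = f4 * f5 ^ k := by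
  intro k
  induction k with
  | zero => simp
  | succ k ih =>
    rw [conj_pow_apply, alpha_f4 f1 f4 f5 s41, map_mul, ih, alphak_f5 f1 f5 c5,
      mul_assoc, ← pow_succ]

lemma alphak_f3 (s31 : f3 * f1 = f1 * (f3 * f4)) (s41 : f4 * f1 = f1 * (f4 * f5))
    (c5 : ∀ g : G, Commute f5 g) :
    ∀ k : ℕ, ((MulAut.conj f1⁻¹) ^ k) f3 = f3 * (f4 ^ k * f5 ^ (k.choose 2)) := by
  intro k
  induction k with
  | zero => simp
  | succ k ih =>
    rw [conj_pow_apply, alpha_f3 f1 f3 f4 s31, map_mul, ih, alphak_f4 f1 f4 f5 s41 c5]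
    simp only [mul_assoc]
    rw [swap' ((c5 f4).pow_left (k.choose 2)).eq]
    rw [← mul_assoc (f4^k) f4, ← pow_succ, ← pow_add, choose2_succ]


lemma alphak_f2 (s21 : f2 * f1 = f1 * (f2 * f3)) (s31 : f3 * f1 = f1 * (f3 * f4))
    (s41 : f4 * f1 = f1 * (f4 * f5)) (c43 : Commute f4 f3)
    (c5 : ∀ g : G, Commute f5 g) :
    ∀ k : ℕ, ((MulAut.conj f1⁻¹) ^ k) f2
      = f2 * (f3 ^ k * (f4 ^ (k.choose 2) * f5 ^ (k.choose 3))) := by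
  intro k
  induction k with
  | zero => simp
  | succ k ih =>
    rw [conj_pow_apply, alpha_f2 f1 f2 f3 s21, map_mul, ih,
      alphak_f3 f1 f3 f4 f5 s31 s41 c5]
    simp only [mul_assoc]
    rw [swap' ((c5 f3).pow_left (k.choose 3)).eq]
    rw [swap' ((c43.pow_left (k.choose 2)).eq)]
    rw [← mul_assoc (f3^k) f3, ← pow_succ]
    rw [swap' ((c5 (f4^k)).pow_left (k.choose 3)).eq]
    rw [merge' f4 (k.choose 2) k]
    rw [← pow_add, choose2_succ, choose3_succ]

lemma alphak_np (s21 : f2 * f1 = f1 * (f2 * f3)) (s31 : f3 * f1 = f1 * (f3 * f4))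
    (s41 : f4 * f1 = f1 * (f4 * f5)) (s32 : f3 * f2 = f2 * (f3 * f5))
    (c42 : Commute f4 f2) (c43 : Commute f4 f3)
    (c5 : ∀ g : G, Commute f5 g) :
    ∀ k b c d e : ℕ, ((MulAut.conj f1⁻¹) ^ k) (f2^b * (f3^c * (f4^d * f5^e)))
      = f2^b * (f3^(c+k*b) * (f4^(d+k*c+k.choose 2*b) *
          f5^(e+k*d+k.choose 2*c+k.choose 3*b+b.choose 2*k))) := by
  intro k b c d e
  rw [map_mul, map_mul, map_mul, map_pow, map_pow, map_pow, map_pow,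
    alphak_f2 f1 f2 f3 f4 f5 s21 s31 s41 c43 c5,
    alphak_f3 f1 f3 f4 f5 s31 s41 c5,
    alphak_f4 f1 f4 f5 s41 c5,
    alphak_f5 f1 f5 c5]
  have e2 : f2 * (f3^k * (f4^(k.choose 2) * f5^(k.choose 3)))
      = f2^1 * (f3^k * (f4^(k.choose 2) * f5^(k.choose 3))) := by rw [pow_one]
  have e3 : f3 * (f4^k * f5^(k.choose 2)) = f2^0 * (f3^1 * (f4^k * f5^(k.choose 2))) := by
    rw [pow_zero, pow_one, one_mul]
  have e4 : f4 * f5^k = f2^0 * (f3^0 * (f4^1 * f5^k)) := by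
    rw [pow_zero, pow_zero, pow_one, one_mul, one_mul]
  have e5 : f5^e = f2^0 * (f3^0 * (f4^0 * f5^e)) := by
    rw [pow_zero, pow_zero, pow_zero, one_mul, one_mul, one_mul]
  rw [e2, e3, e4, e5,
    collect_NPOW f2 f3 f4 f5 s32 c42 c43 c5,
    collect_NPOW f2 f3 f4 f5 s32 c42 c43 c5,
    collect_NPOW f2 f3 f4 f5 s32 c42 c43 c5,
    collect_NMUL f2 f3 f4 f5 s32 c42 c43 c5,
    collect_NMUL f2 f3 f4 f5 s32 c42 c43 c5,
    collect_NMUL f2 f3 f4 f5 s32 c42 c43 c5]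
  congr 3 <;> ring

lemma collect_MULT (s21 : f2 * f1 = f1 * (f2 * f3)) (s31 : f3 * f1 = f1 * (f3 * f4))
    (s41 : f4 * f1 = f1 * (f4 * f5)) (s32 : f3 * f2 = f2 * (f3 * f5))
    (c42 : Commute f4 f2) (c43 : Commute f4 f3)
    (c5 : ∀ g : G, Commute f5 g) :
    ∀ a b c d e A B C D E : ℕ,
      (f1^a * (f2^b * (f3^c * (f4^d * f5^e)))) * (f1^A * (f2^B * (f3^C * (f4^D * f5^E))))
      = f1^(a+A) * (f2^(b+B) * (f3^(c+C+A*b) *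
          (f4^(d+D+A*c+A.choose 2*b) *
           f5^(e+E+A*d+A.choose 2*c+A.choose 3*b+b.choose 2*A+(c+A*b)*B)))) := by
  intro a b c d e A B C D E
  rw [mul_assoc, ← mul_assoc (f2^b * (f3^c * (f4^d * f5^e))) (f1^A),
    collect_move f1 A, mul_assoc, ← mul_assoc (f1^a) (f1^A), ← pow_add,
    alphak_np f1 f2 f3 f4 f5 s21 s31 s41 s32 c42 c43 c5,
    collect_NMUL f2 f3 f4 f5 s32 c42 c43 c5]
  congr 3 <;> ring

end AlphaK

end Collect


/-! ### The coordinate model and the distinguished cocycle polynomial -/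

def Vp (p : ℕ) : Type := ZMod p × ZMod p × ZMod p × ZMod p × ZMod p

instance (p : ℕ) [NeZero p] : Finite (Vp p) := by
  unfold Vp; infer_instance

def m5 {p : ℕ} (i2 i6 : ZMod p) (v w : Vp p) : Vp p :=
  (v.1 + w.1,
   v.2.1 + w.2.1,
   v.2.2.1 + w.2.2.1 + w.1 * v.2.1,
   v.2.2.2.1 + w.2.2.2.1 + w.1 * v.2.2.1 + i2 * (w.1 * w.1 - w.1) * v.2.1,
   v.2.2.2.2 + w.2.2.2.2 + w.1 * v.2.2.2.1 + i2 * (w.1 * w.1 - w.1) * v.2.2.1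
     + i6 * (w.1 * w.1 * w.1 - 3 * (w.1 * w.1) + 2 * w.1) * v.2.1
     + i2 * (v.2.1 * v.2.1 - v.2.1) * w.1
     + (v.2.2.1 + w.1 * v.2.1) * w.2.1)

def Pc {p : ℕ} (i2 : ZMod p) (v w : Vp p) : ZMod p :=
  i2 * (v.2.1 * v.2.1 - v.2.1) * w.1 + (v.2.2.1 + w.1 * v.2.1) * w.2.1

lemma Pc_cocycle {p : ℕ} (i2 i6 : ZMod p) (hi2 : (2 : ZMod p) * i2 = 1) (v w u : Vp p) :
    Pc i2 v w + Pc i2 (m5 i2 i6 v w) u = Pc i2 w u + Pc i2 v (m5 i2 i6 w u) := by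
  simp only [Pc, m5]
  linear_combination (v.2.1 * w.2.1 * u.1) * hi2

lemma Pc_symm {p : ℕ} [Fact p.Prime] (i2 i6 : ZMod p) (hi2 : (2 : ZMod p) * i2 = 1)
    (v w : Vp p) (hc : m5 i2 i6 v w = m5 i2 i6 w v) : Pc i2 v w = Pc i2 w v := by
  have eq3 := congrArg (fun t : Vp p => t.2.2.1) hc
  have eq4 := congrArg (fun t : Vp p => t.2.2.2.1) hc
  have eq5 := congrArg (fun t : Vp p => t.2.2.2.2) hc
  simp only [m5] at eq3 eq4 eq5
  have claim : ∀ v w : Vp p,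
      (v.2.2.1 + w.2.2.1 + w.1 * v.2.1 = w.2.2.1 + v.2.2.1 + v.1 * w.2.1) →
      (v.2.2.2.1 + w.2.2.2.1 + w.1 * v.2.2.1 + i2 * (w.1 * w.1 - w.1) * v.2.1
        = w.2.2.2.1 + v.2.2.2.1 + v.1 * w.2.2.1 + i2 * (v.1 * v.1 - v.1) * w.2.1) →
      v.1 ≠ 0 → Pc i2 v w = Pc i2 w v := by
    intro v w e3 e4 hv
    apply mul_left_cancel₀ hv
    simp only [Pc]
    linear_combination (-v.2.2.1 + i2 * v.2.1 - i2 * v.1 - i2 * v.2.1 * w.1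
        + i2 * v.1 * w.2.1 + i2 * v.1 * v.2.1) * e3
      + v.2.1 * e4
      + (v.1 * v.1 * v.2.1 * w.2.1 - v.1 * v.2.1 * w.1 * w.2.1) * hi2
  by_cases hv : v.1 = 0
  · by_cases hw : w.1 = 0
    · simp only [Pc]
      simp only [hv, hw] at eq5 ⊢
      linear_combination eq5
    · exact (claim w v (by linear_combination -eq3) (by linear_combination -eq4) hw).symm
  · exact claim v w (by linear_combination eq3) (by linear_combination eq4) hv

lemma ch2_id : ∀ n : ℕ, 2 * n.choose 2 + n = n * n := by
  intro n
  induction n with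
  | zero => rfl
  | succ n ih =>
    rw [choose2_succ]
    calc 2 * (n.choose 2 + n) + (n+1) = (2 * n.choose 2 + n) + (2*n+1) := by ring
      _ = n*n + (2*n+1) := by rw [ih]
      _ = (n+1)*(n+1) := by ring

lemma ch3_id : ∀ n : ℕ, 6 * n.choose 3 + 3 * (n * n) = n * n * n + 2 * n := by
  intro n
  induction n with
  | zero => rfl
  | succ n ih =>
    rw [choose3_succ]
    calc 6 * (n.choose 3 + n.choose 2) + 3 * ((n+1)*(n+1))
        = (6 * n.choose 3 + 3 * (n*n)) + 3*(2 * n.choose 2 + n) + (3*n + 3) := by ring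
      _ = (n*n*n + 2*n) + 3*(n*n) + (3*n+3) := by rw [ih, ch2_id n]
      _ = (n+1)*(n+1)*(n+1) + 2*(n+1) := by ring

lemma cast_choose2 {p : ℕ} (i2 : ZMod p) (hi2 : (2 : ZMod p) * i2 = 1) (n : ℕ) :
    ((n.choose 2 : ℕ) : ZMod p) = i2 * ((n : ZMod p) * (n : ZMod p) - (n : ZMod p)) := by
  have h := congrArg (fun m : ℕ => (m : ZMod p)) (ch2_id n)
  push_cast at h
  linear_combination i2 * h - ((n.choose 2 : ℕ) : ZMod p) * hi2

lemma cast_choose3 {p : ℕ} (i6 : ZMod p) (hi6 : (6 : ZMod p) * i6 = 1) (n : ℕ) :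
    ((n.choose 3 : ℕ) : ZMod p)
      = i6 * ((n : ZMod p) * (n : ZMod p) * (n : ZMod p)
          - 3 * ((n : ZMod p) * (n : ZMod p)) + 2 * (n : ZMod p)) := by
  have h := congrArg (fun m : ℕ => (m : ZMod p)) (ch3_id n)
  push_cast at h
  linear_combination i6 * h - ((n.choose 3 : ℕ) : ZMod p) * hi6

def phi5 {G : Type*} [Group G] (f1 f2 f3 f4 f5 : G) {p : ℕ} (v : Vp p) : G :=
  f1 ^ v.1.val * (f2 ^ v.2.1.val * (f3 ^ v.2.2.1.val * (f4 ^ v.2.2.2.1.val * f5 ^ v.2.2.2.2.val)))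


/-- Let `p` be an odd prime and `G` the group `Φ₁₀(1⁵)`, i.e. the group of order `p⁵` with
generators `f1,…,f5` and relations `fᵢ^p = 1`, `[f2,f1] = f3`, `[f3,f1] = f4`,
`[f4,f1] = [f3,f2] = f5`, `[f4,f2] = [f4,f3] = 1`, and `f5` central. Then `B₀(G) ≠ 0`. -/
theorem B0_phi10_ne_bot (p : ℕ) (hp : p.Prime) (hodd : Odd p)
    (G : Type) [Group G] [Finite G] (hcard : Nat.card G = p ^ 5)
    (f1 f2 f3 f4 f5 : G)
    (hgen : Subgroup.closure {f1, f2, f3, f4, f5} = ⊤)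
    (h1p : f1 ^ p = 1) (h2p : f2 ^ p = 1) (h3p : f3 ^ p = 1) (h4p : f4 ^ p = 1)
    (h5p : f5 ^ p = 1)
    (r1 : cmt f2 f1 = f3) (r2 : cmt f3 f1 = f4) (r3 : cmt f4 f1 = f5)
    (r4 : cmt f3 f2 = f5) (r5 : cmt f4 f2 = 1) (r6 : cmt f4 f3 = 1)
    (h5c : f5 ∈ Subgroup.center G) :
    B0 G ≠ ⊥ := by
  intro hbot
  classical
  haveI hFact : Fact p.Prime := ⟨hp⟩
  haveI : NeZero p := ⟨hp.pos.ne'⟩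
  haveI : Fact (1 < p) := ⟨hp.one_lt⟩
  have r1' : f2⁻¹ * f1⁻¹ * f2 * f1 = f3 := r1
  have r2' : f3⁻¹ * f1⁻¹ * f3 * f1 = f4 := r2
  have r3' : f4⁻¹ * f1⁻¹ * f4 * f1 = f5 := r3
  have r4' : f3⁻¹ * f2⁻¹ * f3 * f2 = f5 := r4
  have r5' : f4⁻¹ * f2⁻¹ * f4 * f2 = 1 := r5
  have r6' : f4⁻¹ * f3⁻¹ * f4 * f3 = 1 := r6
  have c5 : ∀ g : G, Commute f5 g := fun g => (Subgroup.mem_center_iff.mp h5c g).symm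
  have s21 : f2 * f1 = f1 * (f2 * f3) := by
    calc f2 * f1 = f1 * (f2 * (f2⁻¹ * f1⁻¹ * f2 * f1)) := by group
      _ = f1 * (f2 * f3) := by rw [r1']
  have s31 : f3 * f1 = f1 * (f3 * f4) := by
    calc f3 * f1 = f1 * (f3 * (f3⁻¹ * f1⁻¹ * f3 * f1)) := by group
      _ = f1 * (f3 * f4) := by rw [r2']
  have s41 : f4 * f1 = f1 * (f4 * f5) := by
    calc f4 * f1 = f1 * (f4 * (f4⁻¹ * f1⁻¹ * f4 * f1)) := by group
      _ = f1 * (f4 * f5) := by rw [r3']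
  have s32 : f3 * f2 = f2 * (f3 * f5) := by
    calc f3 * f2 = f2 * (f3 * (f3⁻¹ * f2⁻¹ * f3 * f2)) := by group
      _ = f2 * (f3 * f5) := by rw [r4']
  have c42 : Commute f4 f2 := by
    show f4 * f2 = f2 * f4
    calc f4 * f2 = (f2 * f4) * (f4⁻¹ * f2⁻¹ * f4 * f2) := by group
      _ = f2 * f4 := by rw [r5', mul_one]
  have c43 : Commute f4 f3 := by
    show f4 * f3 = f3 * f4
    calc f4 * f3 = (f3 * f4) * (f4⁻¹ * f3⁻¹ * f4 * f3) := by group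
      _ = f3 * f4 := by rw [r6', mul_one]
  have MULT := collect_MULT f1 f2 f3 f4 f5 s21 s31 s41 s32 c42 c43 c5
  have powmod : ∀ (g : G), g ^ p = 1 → ∀ n : ℕ, g ^ n = g ^ (n % p) := by
    intro g hg n
    conv_lhs => rw [← Nat.div_add_mod n p]
    rw [pow_add, pow_mul, hg, one_pow, one_mul]
  -- a generic builder: the range of a multiplicatively closed pointed map is a subgroup
  have build : ∀ {ι : Type} (μ : ι → G), (∃ i, μ i = 1) → (∀ i j, ∃ k, μ i * μ j = μ k) →
      ∃ S : Subgroup G, ∀ x, x ∈ S ↔ x ∈ Set.range μ := by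
    rintro ι μ ⟨i1, hone⟩ hmul
    have hpow : ∀ (i : ι) (n : ℕ), ∃ k, (μ i) ^ n = μ k := by
      intro i n
      induction n with
      | zero => exact ⟨i1, by rw [pow_zero, hone]⟩
      | succ n ih =>
        obtain ⟨k, hk⟩ := ih
        obtain ⟨l, hl⟩ := hmul k i
        exact ⟨l, by rw [pow_succ, hk, hl]⟩
    refine ⟨{ carrier := Set.range μ
            , one_mem' := ⟨i1, hone⟩
            , mul_mem' := ?_
            , inv_mem' := ?_ }, fun x => Iff.rfl⟩
    · rintro a b ⟨i, rfl⟩ ⟨j, rfl⟩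
      obtain ⟨k, hk⟩ := hmul i j
      exact ⟨k, hk.symm⟩
    · rintro a ⟨i, rfl⟩
      show (μ i)⁻¹ ∈ Set.range μ
      have ho : 0 < orderOf (μ i) := orderOf_pos _
      have h1 : (μ i) ^ (orderOf (μ i) - 1) * μ i = 1 := by
        rw [← pow_succ, Nat.sub_add_cancel ho, pow_orderOf_eq_one]
      have hinv : (μ i)⁻¹ = (μ i) ^ (orderOf (μ i) - 1) := inv_eq_of_mul_eq_one_left h1
      rw [hinv]
      obtain ⟨k, hk⟩ := hpow i (orderOf (μ i) - 1)
      exact ⟨k, hk.symm⟩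
  have hp35 : p = 3 ∨ 5 ≤ p := by
    have h2 := hp.two_le
    by_contra hcon
    push_neg at hcon
    obtain ⟨hne3, hlt⟩ := hcon
    interval_cases p
    · exact (by norm_num : ¬ Odd 2) hodd
    · exact hne3 rfl
    · exact (by norm_num : ¬ Nat.Prime 4) hp
  rcases hp35 with hp3 | hp5
  · -- the case p = 3: the hypotheses are contradictory
    subst hp3
    have key := MULT 0 1 0 0 0 3 0 0 0 0
    have cA : (3:ℕ).choose 2 = 3 := by decide
    have cB : (3:ℕ).choose 3 = 1 := by decide
    have cC : (1:ℕ).choose 2 = 0 := by decide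
    simp only [cA, cB, cC] at key
    norm_num at key
    rw [h1p, h3p, h4p] at key
    simp only [one_mul, mul_one] at key
    -- key : f2 = f2 * f5
    have hf5 : f5 = 1 := by
      have h := key.symm
      have h2 : f2 * f5 = f2 * 1 := by rw [mul_one]; exact h
      exact mul_left_cancel h2
    have h5pow : ∀ k : ℕ, f5 ^ k = 1 := fun k => by rw [hf5, one_pow]
    set μ : (ZMod 3 × ZMod 3 × ZMod 3 × ZMod 3) → G := fun v =>
      f1 ^ v.1.val * (f2 ^ v.2.1.val * (f3 ^ v.2.2.1.val * (f4 ^ v.2.2.2.val * f5 ^ 0)))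
      with hμ
    have hone : μ (0, 0, 0, 0) = 1 := by
      simp [hμ, ZMod.val_zero]
    have hmulμ : ∀ v w, ∃ u, μ v * μ w = μ u := by
      intro v w
      refine ⟨(↑(v.1.val + w.1.val), ↑(v.2.1.val + w.2.1.val),
        ↑(v.2.2.1.val + w.2.2.1.val + w.1.val * v.2.1.val),
        ↑(v.2.2.2.val + w.2.2.2.val + w.1.val * v.2.2.1.val
            + (w.1.val).choose 2 * v.2.1.val)), ?_⟩
      simp only [hμ]
      rw [MULT]
      simp only [h5pow]
      rw [powmod f1 h1p, powmod f2 h2p, powmod f3 h3p, powmod f4 h4p]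
      simp only [ZMod.val_natCast]
    obtain ⟨S, hS⟩ := build μ ⟨(0,0,0,0), hone⟩ hmulμ
    have hval1 : (1 : ZMod 3).val = 1 := rfl
    have hgens : {f1, f2, f3, f4, f5} ⊆ (S : Set G) := by
      intro x hx
      have hb : ∀ v, μ v ∈ S := fun v => (hS _).mpr ⟨v, rfl⟩
      simp only [Set.mem_insert_iff, Set.mem_singleton_iff] at hx
      rcases hx with rfl | rfl | rfl | rfl | rfl
      · have : μ (1,0,0,0) = x := by simp [hμ, hval1, ZMod.val_zero]
        exact this ▸ hb _
      · have : μ (0,1,0,0) = x := by simp [hμ, hval1, ZMod.val_zero]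
        exact this ▸ hb _
      · have : μ (0,0,1,0) = x := by simp [hμ, hval1, ZMod.val_zero]
        exact this ▸ hb _
      · have : μ (0,0,0,1) = x := by simp [hμ, hval1, ZMod.val_zero]
        exact this ▸ hb _
      · have : μ (0,0,0,0) = x := by rw [hone, hf5]
        exact this ▸ hb _
    have hsurj : Function.Surjective μ := by
      intro g
      have hg : g ∈ Subgroup.closure {f1, f2, f3, f4, f5} := by
        rw [hgen]; trivial
      exact (hS g).mp ((Subgroup.closure_le S).mpr hgens hg)
    have hle := Nat.card_le_card_of_surjective μ hsurj
    rw [hcard] at hle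
    simp only [Nat.card_prod, Nat.card_zmod] at hle
    norm_num at hle
  · -- the main case p ≥ 5
    have h2ne : (2 : ZMod p) ≠ 0 := by
      intro h
      have h' : ((2:ℕ) : ZMod p) = 0 := by exact_mod_cast h
      have := (ZMod.natCast_eq_zero_iff 2 p).mp h'
      have := Nat.le_of_dvd (by norm_num) this
      omega
    have h6ne : (6 : ZMod p) ≠ 0 := by
      intro h
      have h' : ((6:ℕ) : ZMod p) = 0 := by exact_mod_cast h
      have hd := (ZMod.natCast_eq_zero_iff 6 p).mp h'
      have := Nat.le_of_dvd (by norm_num) hd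
      interval_cases p
      · exact (by norm_num : ¬ (5 ∣ 6)) hd
      · exact (by norm_num : ¬ Nat.Prime 6) hp
    set i2 : ZMod p := (2 : ZMod p)⁻¹ with hi2def
    set i6 : ZMod p := (6 : ZMod p)⁻¹ with hi6def
    have hi2 : (2 : ZMod p) * i2 = 1 := mul_inv_cancel₀ h2ne
    have hi6 : (6 : ZMod p) * i6 = 1 := mul_inv_cancel₀ h6ne
    set φ : Vp p → G := phi5 f1 f2 f3 f4 f5 with hφ
    have hval : ∀ x : ZMod p, ((x.val : ℕ) : ZMod p) = x := fun x => ZMod.natCast_rightInverse x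
    have hcoord : ∀ (g : G), g ^ p = 1 → ∀ (n : ℕ) (x : ZMod p),
        ((n : ZMod p) = x) → g ^ n = g ^ x.val := by
      intro g hg n x hx
      rw [powmod g hg n, ← hx, ZMod.val_natCast]
    have hom : ∀ v w : Vp p, φ v * φ w = φ (m5 i2 i6 v w) := by
      intro v w
      simp only [hφ]
      unfold phi5
      rw [MULT]
      congr 1
      · apply hcoord f1 h1p
        simp only [m5]
        push_cast [cast_choose2 i2 hi2, cast_choose3 i6 hi6]
        simp only [hval]
        try ring
      congr 1
      · apply hcoord f2 h2p
        simp only [m5]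
        push_cast [cast_choose2 i2 hi2, cast_choose3 i6 hi6]
        simp only [hval]
        try ring
      congr 1
      · apply hcoord f3 h3p
        simp only [m5]
        push_cast [cast_choose2 i2 hi2, cast_choose3 i6 hi6]
        simp only [hval]
        try ring
      congr 1
      · apply hcoord f4 h4p
        simp only [m5]
        push_cast [cast_choose2 i2 hi2, cast_choose3 i6 hi6]
        simp only [hval]
        try ring
      · apply hcoord f5 h5p
        simp only [m5]
        push_cast [cast_choose2 i2 hi2, cast_choose3 i6 hi6]
        simp only [hval]
        try ring
    have honeφ : φ ((0,0,0,0,0) : Vp p) = 1 := by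
      simp only [hφ]
      unfold phi5
      simp [ZMod.val_zero]
    obtain ⟨S, hS⟩ := build φ ⟨(0,0,0,0,0), honeφ⟩ (fun v w => ⟨m5 i2 i6 v w, hom v w⟩)
    have hval1 : (1 : ZMod p).val = 1 := ZMod.val_one p
    have hφ1 : φ ((1,0,0,0,0) : Vp p) = f1 := by
      simp only [hφ]; unfold phi5; simp [hval1, ZMod.val_zero]
    have hφ2 : φ ((0,1,0,0,0) : Vp p) = f2 := by
      simp only [hφ]; unfold phi5; simp [hval1, ZMod.val_zero]
    have hφ3 : φ ((0,0,1,0,0) : Vp p) = f3 := by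
      simp only [hφ]; unfold phi5; simp [hval1, ZMod.val_zero]
    have hφ4 : φ ((0,0,0,1,0) : Vp p) = f4 := by
      simp only [hφ]; unfold phi5; simp [hval1, ZMod.val_zero]
    have hφ5 : φ ((0,0,0,0,1) : Vp p) = f5 := by
      simp only [hφ]; unfold phi5; simp [hval1, ZMod.val_zero]
    have hgens : {f1, f2, f3, f4, f5} ⊆ (S : Set G) := by
      intro x hx
      have hb : ∀ v, φ v ∈ S := fun v => (hS _).mpr ⟨v, rfl⟩
      simp only [Set.mem_insert_iff, Set.mem_singleton_iff] at hx
      rcases hx with rfl | rfl | rfl | rfl | rfl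
      exacts [hφ1 ▸ hb _, hφ2 ▸ hb _, hφ3 ▸ hb _, hφ4 ▸ hb _, hφ5 ▸ hb _]
    have hsurj : Function.Surjective φ := by
      intro g
      have hg : g ∈ Subgroup.closure {f1, f2, f3, f4, f5} := by
        rw [hgen]; trivial
      exact (hS g).mp ((Subgroup.closure_le S).mpr hgens hg)
    have hcards : Nat.card (Vp p) = Nat.card G := by
      rw [hcard]
      unfold Vp
      simp only [Nat.card_prod, Nat.card_zmod]
      ring
    have hbij : Function.Bijective φ :=
      (Nat.bijective_iff_surjective_and_card φ).mpr ⟨hsurj, hcards⟩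
    set ee := Equiv.ofBijective φ hbij with hee
    have happ : ∀ v : Vp p, ee v = φ v := fun v => rfl
    have hpsimul : ∀ g h : G, ee.symm (g * h) = m5 i2 i6 (ee.symm g) (ee.symm h) := by
      intro g h
      apply ee.injective
      rw [Equiv.apply_symm_apply, happ, ← hom, ← happ, ← happ,
        Equiv.apply_symm_apply, Equiv.apply_symm_apply]
    set ω : G → G → QZ := fun g h => eps p (Pc i2 (ee.symm g) (ee.symm h)) with hωdef
    have hcoc : IsGrpCocycle ω := by
      intro g h k
      show eps p _ + eps p _ = eps p _ + eps p _
      rw [hpsimul g h, hpsimul h k, ← eps_add, ← eps_add]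
      exact congrArg (eps p) (Pc_cocycle i2 i6 hi2 _ _ _)
    have hsym : ∀ g h : G, g * h = h * g → ω g h = ω h g := by
      intro g h hc
      apply congrArg (eps p)
      apply Pc_symm i2 i6 hi2
      rw [← hpsimul, ← hpsimul, hc]
    have hrest : RestrictsToCoboundaries ω := by
      intro A hA
      refine bicyclic_coboundary hA _ ?_ ?_
      · intro a b c
        show ω ↑a ↑b + ω ↑(a*b) ↑c = ω ↑b ↑c + ω ↑a ↑(b*c)
        rw [Subgroup.coe_mul, Subgroup.coe_mul]
        exact hcoc ↑a ↑b ↑c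
      · intro a b hab
        show ω ↑a ↑b = ω ↑b ↑a
        apply hsym
        rw [← Subgroup.coe_mul, ← Subgroup.coe_mul, hab]
    have hmem : (QuotientAddGroup.mk (⟨ω, hcoc⟩ : cocycles2 G) : H2 G) ∈ B0 G :=
      ⟨⟨ω, hcoc⟩, rfl, hrest⟩
    rw [hbot, AddSubgroup.mem_bot] at hmem
    have hcob : IsGrpCoboundary ω := (QuotientAddGroup.eq_zero_iff _).mp hmem
    obtain ⟨cb, hcb⟩ := hcob
    have hpsi : ∀ (v : Vp p) (g : G), φ v = g → ee.symm g = v := by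
      intro v g hg
      rw [← hg, ← happ]
      exact ee.symm_apply_apply v
    have hψ1 := hpsi _ _ hφ1
    have hψ2 := hpsi _ _ hφ2
    have hψ3 := hpsi _ _ hφ3
    have hψ4 := hpsi _ _ hφ4
    have hψ5 := hpsi _ _ hφ5
    have hPu5 : ∀ v : Vp p, Pc i2 v ((0,0,0,0,1) : Vp p) = 0 := by
      intro v
      simp [Pc]
    have hv41 : ω f4 f1 = 0 := by
      show eps p _ = 0
      rw [hψ4, hψ1]
      have hz : Pc i2 ((0,0,0,1,0) : Vp p) ((1,0,0,0,0) : Vp p) = 0 := by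
        simp [Pc]
      rw [hz]
      exact eps_zero
    have hv14 : ω f1 f4 = 0 := by
      show eps p _ = 0
      rw [hψ1, hψ4]
      have hz : Pc i2 ((1,0,0,0,0) : Vp p) ((0,0,0,1,0) : Vp p) = 0 := by
        simp [Pc]
      rw [hz]
      exact eps_zero
    have hv145 : ω (f1 * f4) f5 = 0 := by
      show eps p _ = 0
      rw [hψ5, hPu5]
      exact eps_zero
    have hv32 : ω f3 f2 = eps p 1 := by
      show eps p _ = eps p 1
      rw [hψ3, hψ2]
      congr 1
      simp [Pc]
    have hv23 : ω f2 f3 = 0 := by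
      show eps p _ = 0
      rw [hψ2, hψ3]
      have hz : Pc i2 ((0,1,0,0,0) : Vp p) ((0,0,1,0,0) : Vp p) = 0 := by
        simp [Pc]
      rw [hz]
      exact eps_zero
    have hv235 : ω (f2 * f3) f5 = 0 := by
      show eps p _ = 0
      rw [hψ5, hPu5]
      exact eps_zero
    have hx1 : (f1 * f4) * f5 = f4 * f1 := by rw [mul_assoc, ← s41]
    have hx2 : (f2 * f3) * f5 = f3 * f2 := by rw [mul_assoc, ← s32]
    have E1 : (0 : QZ) = - cb f5 := by
      calc (0 : QZ) = ω f4 f1 - ω f1 f4 - ω (f1*f4) f5 := by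
            rw [hv41, hv14, hv145]; abel
        _ = - cb f5 := by
            rw [hcb f4 f1, hcb f1 f4, hcb (f1*f4) f5, hx1]
            abel
    have E2 : eps p 1 = - cb f5 := by
      calc eps p 1 = ω f3 f2 - ω f2 f3 - ω (f2*f3) f5 := by
            rw [hv32, hv23, hv235]; abel
        _ = - cb f5 := by
            rw [hcb f3 f2, hcb f2 f3, hcb (f2*f3) f5, hx2]
            abel
    rw [← E1] at E2
    exact eps_one_ne_zero hp.one_lt E2
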